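/- For every k and n, the function m ↦ f_k(n,m)/m is non-increasing in m, where f_k(n,m) is the expected maximum number of simultaneously satisfiable clauses in a uniformly random k-SAT formula with n variables and m clauses. -/
import Mathlib


/-- A proper `k`-clause on `n` variables: `k` distinct variables, each with a sign. -/
structure KClause (n k : ℕ) where
  vars : Fin k ↪ Fin n
  signs : Fin k → Bool
deriving DecidableEq

noncomputable instance (n k : ℕ) : Fintype (KClause n k) :=
  Fintype.ofEquiv ((Fin k ↪ Fin n) × (Fin k → Bool))
    { toFun := fun p => ⟨p.1, p.2⟩
      invFun := fun c => ⟨c.vars, c.signs⟩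
      left_inv := fun _ => rfl
      right_inv := fun _ => rfl }

/-- An assignment satisfies a clause if some literal is true. -/
def KClause.Sat {n k : ℕ} (a : Fin n → Bool) (c : KClause n k) : Prop :=
  ∃ i, a (c.vars i) = c.signs i

instance {n k : ℕ} (a : Fin n → Bool) (c : KClause n k) : Decidable (c.Sat a) :=
  inferInstanceAs (Decidable (∃ i, a (c.vars i) = c.signs i))

/-- The maximum number of clauses of the formula `F` satisfiable by a single assignment. -/
def maxSat {n k m : ℕ} (F : Fin m → KClause n k) : ℕ :=
  Finset.univ.sup fun a : Fin n → Bool =>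
    (Finset.univ.filter fun j => (F j).Sat a).card

/-- `f k n m`: the expected value of `maxSat` over a uniformly random `k`-SAT formula
with `n` variables and `m` clauses (clauses chosen independently and uniformly). -/
noncomputable def fExp (k n m : ℕ) : ℝ :=
  (∑ F : Fin m → KClause n k, (maxSat F : ℝ)) / (Fintype.card (Fin m → KClause n k))

lemma filter_succAbove {m : ℕ} (P : Fin (m+1) → Prop) [DecidablePred P] (j : Fin (m+1)) :
    (Finset.univ.filter P).card
      = (Finset.univ.filter fun i : Fin m => P (j.succAbove i)).card
        + (if P j then 1 else 0) := by
  classical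
  simp only [Finset.card_filter]
  rw [Fin.sum_univ_succAbove (fun i => if P i then 1 else 0) j]
  exact add_comm _ _

lemma mul_maxSat_le {n k m : ℕ} (F : Fin (m+1) → KClause n k) :
    m * maxSat F ≤ ∑ j : Fin (m+1), maxSat (F ∘ j.succAbove) := by
  classical
  obtain ⟨a, -, ha⟩ := Finset.exists_mem_eq_sup Finset.univ Finset.univ_nonempty
      (fun a : Fin n → Bool => (Finset.univ.filter fun j => (F j).Sat a).card)
  have ha' : maxSat F = (Finset.univ.filter fun j => (F j).Sat a).card := ha
  have hcnt : ∀ j : Fin (m+1),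
      (Finset.univ.filter fun i : Fin m => (F (j.succAbove i)).Sat a).card
        + (if (F j).Sat a then 1 else 0) = maxSat F := by
    intro j
    rw [ha', filter_succAbove (fun i => (F i).Sat a) j]
  have hle : ∀ j : Fin (m+1),
      (Finset.univ.filter fun i : Fin m => (F (j.succAbove i)).Sat a).card
        ≤ maxSat (F ∘ j.succAbove) := by
    intro j
    exact Finset.le_sup (f := fun a : Fin n → Bool =>
      (Finset.univ.filter fun i => ((F ∘ j.succAbove) i).Sat a).card) (Finset.mem_univ a)
  have hite : ∑ j : Fin (m+1), (if (F j).Sat a then 1 else 0) = maxSat F := by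
    rw [ha', Finset.card_filter]
  have hsum : ∑ j : Fin (m+1),
      (Finset.univ.filter fun i : Fin m => (F (j.succAbove i)).Sat a).card
        = m * maxSat F := by
    have h1 : (∑ j : Fin (m+1),
        ((Finset.univ.filter fun i : Fin m => (F (j.succAbove i)).Sat a).card
          + (if (F j).Sat a then 1 else 0))) = (m+1) * maxSat F := by
      rw [Finset.sum_congr rfl fun j _ => hcnt j]
      simp [Finset.sum_const, Finset.card_univ, mul_comm]
    rw [Finset.sum_add_distrib, hite, Nat.succ_mul] at h1
    omega
  rw [← hsum]
  exact Finset.sum_le_sum fun j _ => hle j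

lemma sum_step (n k m : ℕ) :
    m * ∑ F : Fin (m+1) → KClause n k, maxSat F
      ≤ (m+1) * Fintype.card (KClause n k) * ∑ G : Fin m → KClause n k, maxSat G := by
  classical
  calc m * ∑ F : Fin (m+1) → KClause n k, maxSat F
      = ∑ F : Fin (m+1) → KClause n k, m * maxSat F := by rw [Finset.mul_sum]
    _ ≤ ∑ F : Fin (m+1) → KClause n k, ∑ j : Fin (m+1), maxSat (F ∘ j.succAbove) :=
        Finset.sum_le_sum fun F _ => mul_maxSat_le F
    _ = ∑ j : Fin (m+1), ∑ F : Fin (m+1) → KClause n k, maxSat (F ∘ j.succAbove) :=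
        Finset.sum_comm
    _ = ∑ j : Fin (m+1), ∑ p : KClause n k × (Fin m → KClause n k), maxSat p.2 := by
        refine Finset.sum_congr rfl fun j _ => ?_
        rw [← Equiv.sum_comp (Fin.insertNthEquiv (fun _ => KClause n k) j)
            (fun F => maxSat (F ∘ j.succAbove))]
        refine Finset.sum_congr rfl fun p _ => ?_
        congr 1
        funext i
        simp [Fin.insertNthEquiv, Function.comp]
    _ = (m+1) * Fintype.card (KClause n k) * ∑ G : Fin m → KClause n k, maxSat G := by
        simp [Fintype.sum_prod_type, Finset.sum_const, Finset.card_univ, smul_eq_mul]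
        ring


lemma fExp_eq (k n m : ℕ) :
    fExp k n m = (∑ F : Fin m → KClause n k, (maxSat F : ℝ))
      / ((Fintype.card (KClause n k) : ℝ)) ^ m := by
  classical
  rw [fExp, Fintype.card_fun, Fintype.card_fin]
  push_cast
  ring

lemma fExp_step (k n m : ℕ) (hm : 0 < m) :
    fExp k n (m+1) / (m+1) ≤ fExp k n m / m := by
  classical
  rcases Nat.eq_zero_or_pos (Fintype.card (KClause n k)) with h0 | hpos
  · have e1 : fExp k n m = 0 := by
      rw [fExp_eq, h0]
      simp [zero_pow hm.ne']
    have e2 : fExp k n (m+1) = 0 := by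
      rw [fExp_eq, h0]
      simp
    simp [e1, e2]
  · have key : (m : ℝ) * ∑ F : Fin (m+1) → KClause n k, (maxSat F : ℝ)
        ≤ ((m : ℝ)+1) * (Fintype.card (KClause n k) : ℝ)
            * ∑ G : Fin m → KClause n k, (maxSat G : ℝ) := by
      have := sum_step n k m
      push_cast
      exact_mod_cast this
    have hNpos : (0:ℝ) < (Fintype.card (KClause n k) : ℝ) := by exact_mod_cast hpos
    have hmpos : (0:ℝ) < (m : ℝ) := by exact_mod_cast hm
    rw [fExp_eq, fExp_eq, div_div, div_div]
    rw [div_le_div_iff₀ (by positivity) (by positivity)]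
    push_cast
    calc (∑ F : Fin (m+1) → KClause n k, (maxSat F : ℝ))
          * ((Fintype.card (KClause n k) : ℝ) ^ m * (m : ℝ))
        = (Fintype.card (KClause n k) : ℝ) ^ m
            * ((m : ℝ) * ∑ F : Fin (m+1) → KClause n k, (maxSat F : ℝ)) := by ring
      _ ≤ (Fintype.card (KClause n k) : ℝ) ^ m
            * (((m : ℝ)+1) * (Fintype.card (KClause n k) : ℝ)
                * ∑ G : Fin m → KClause n k, (maxSat G : ℝ)) :=
          mul_le_mul_of_nonneg_left key (by positivity)
      _ = (∑ G : Fin m → KClause n k, (maxSat G : ℝ))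
            * ((Fintype.card (KClause n k) : ℝ) ^ (m+1) * ((m : ℝ)+1)) := by
          rw [pow_succ]; ring


/-- For every `k` and `n`, `m ↦ f_k(n,m)/m` is non-increasing in `m`. -/
theorem fExp_div_antitone (k n : ℕ) (m₁ m₂ : ℕ) (hm : 0 < m₁) (h : m₁ ≤ m₂) :
    fExp k n m₂ / m₂ ≤ fExp k n m₁ / m₁ := by
  obtain ⟨d, rfl⟩ := Nat.exists_eq_add_of_le h
  induction d with
  | zero => simp
  | succ d ih =>
    calc fExp k n (m₁ + (d+1)) / (m₁ + (d+1) : ℕ)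
        = fExp k n ((m₁ + d) + 1) / ((m₁ + d : ℕ) + 1) := by
          push_cast [Nat.add_assoc]; ring_nf
      _ ≤ fExp k n (m₁ + d) / (m₁ + d : ℕ) :=
          fExp_step k n (m₁ + d) (by omega)
      _ ≤ fExp k n m₁ / m₁ := ih (by omega)
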